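/- arXiv:1302.6526 — 5 statements merged into one kernel-verified Lean document; each statement's English description precedes it below -/
import Mathlib

section
/- Let R be a commutative ring that is an algebra over ℚ, and let α, β ∈ R. Then there exists a unique formal power series φ ∈ R[[t]] with constant coefficient 0 and coefficient of t equal to 1 (i.e. φ ∈ t + t²·R[[t]]) satisfying the differential equation (1 + α·t − β·φ)·φ′ = 1 + φ, where φ′ denotes the formal derivative of φ. -/
open PowerSeries Finset

/-- The right-hand side of the coefficient recursion. -/
def rhsFun {R : Type*} [CommRing R] (α β : R) (f : ℕ → R) (n : ℕ) : R :=
  (if n = 0 then (1 : R) else 0) + f n - α * n * f n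
    + β * ∑ k ∈ Finset.range n, f (k + 1) * ((n - k : ℕ) * f (n - k))

/-- The coefficients of the unique solution. -/
noncomputable def solAux {R : Type*} [CommRing R] [Algebra ℚ R] (α β : R) : ℕ → R
  | 0 => 0
  | (n + 1) =>
    ((n + 1 : ℚ))⁻¹ • ((if n = 0 then (1 : R) else 0) + solAux α β n - α * n * solAux α β n
      + β * ∑ k ∈ (Finset.range n).attach,
          solAux α β (k.1 + 1) * ((n - k.1 : ℕ) * solAux α β (n - k.1)))
  termination_by n => n
  decreasing_by
  · exact Nat.lt_succ_self n
  · have := k.2; rw [Finset.mem_range] at this; omega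
  · have := k.2; rw [Finset.mem_range] at this; omega

lemma natCast_succ_isUnit {R : Type*} [CommRing R] [Algebra ℚ R] (n : ℕ) :
    IsUnit ((n : R) + 1) := by
  have h : ((n : R) + 1) = algebraMap ℚ R ((n : ℚ) + 1) := by push_cast; ring
  rw [h]
  exact (isUnit_iff_ne_zero.2 (Nat.cast_add_one_ne_zero n)).map (algebraMap ℚ R)

lemma solAux_spec {R : Type*} [CommRing R] [Algebra ℚ R] (α β : R) (n : ℕ) :
    ((n : R) + 1) * solAux α β (n + 1) = rhsFun α β (solAux α β) n := by
  rw [solAux, rhsFun, Algebra.smul_def]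
  rw [show ((n : R) + 1) = algebraMap ℚ R ((n : ℚ) + 1) by push_cast; ring]
  rw [← mul_assoc, ← map_mul, mul_inv_cancel₀ (Nat.cast_add_one_ne_zero n), map_one, one_mul]
  congr 1
  exact congrArg (β * ·) (Finset.sum_attach (Finset.range n)
    (fun k => solAux α β (k + 1) * ((n - k : ℕ) * solAux α β (n - k))))

lemma coeff_derivativeFun_aux {R : Type*} [CommRing R] (f : PowerSeries R) (n : ℕ) :
    PowerSeries.coeff n f.derivativeFun = PowerSeries.coeff (n + 1) f * (n + 1) :=
  PowerSeries.coeff_derivative f n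

lemma coeff_self_mul_deriv {R : Type*} [CommRing R] (ψ : PowerSeries R)
    (h0 : PowerSeries.coeff 0 ψ = 0) (n : ℕ) :
    PowerSeries.coeff n (ψ * ψ.derivativeFun)
      = ∑ k ∈ Finset.range n,
          PowerSeries.coeff (k + 1) ψ * ((n - k : ℕ) * PowerSeries.coeff (n - k) ψ) := by
  rw [PowerSeries.coeff_mul, Finset.Nat.sum_antidiagonal_eq_sum_range_succ_mk,
    Finset.sum_range_succ']
  rw [h0, zero_mul, add_zero]
  refine Finset.sum_congr rfl fun i hi => ?_
  rw [Finset.mem_range] at hi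
  rw [coeff_derivativeFun_aux]
  have h1 : n - (i + 1) + 1 = n - i := by omega
  have h2 : ((n - (i + 1) : ℕ) : R) + 1 = ((n - i : ℕ) : R) := by
    exact_mod_cast congrArg (Nat.cast : ℕ → R) h1
  rw [h1, h2]
  ring

lemma coeff_X_mul_deriv {R : Type*} [CommRing R] (ψ : PowerSeries R) (n : ℕ) :
    PowerSeries.coeff n (PowerSeries.X * ψ.derivativeFun)
      = (n : R) * PowerSeries.coeff n ψ := by
  cases n with
  | zero => simp
  | succ m =>
    rw [PowerSeries.coeff_succ_X_mul, coeff_derivativeFun_aux]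
    push_cast
    ring

lemma key_iff {R : Type*} [CommRing R] (α β : R) (ψ : PowerSeries R)
    (h0 : PowerSeries.coeff 0 ψ = 0) :
    ((1 + PowerSeries.C α * PowerSeries.X - PowerSeries.C β * ψ) * ψ.derivativeFun
        = 1 + ψ) ↔
      ∀ n : ℕ, ((n : R) + 1) * PowerSeries.coeff (n + 1) ψ
        = rhsFun α β (fun k => PowerSeries.coeff k ψ) n := by
  rw [PowerSeries.ext_iff]
  refine forall_congr' fun n => ?_
  have hL : PowerSeries.coeff n
      ((1 + PowerSeries.C α * PowerSeries.X - PowerSeries.C β * ψ) * ψ.derivativeFun)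
      = ((n : R) + 1) * PowerSeries.coeff (n + 1) ψ
        + α * ((n : R) * PowerSeries.coeff n ψ)
        - β * ∑ k ∈ Finset.range n,
            PowerSeries.coeff (k + 1) ψ * ((n - k : ℕ) * PowerSeries.coeff (n - k) ψ) := by
    rw [sub_mul, add_mul, one_mul, mul_assoc, mul_assoc, map_sub, map_add,
      coeff_derivativeFun_aux, PowerSeries.coeff_C_mul, PowerSeries.coeff_C_mul,
      coeff_X_mul_deriv, coeff_self_mul_deriv ψ h0]
    ring
  have hR : PowerSeries.coeff n (1 + ψ)
      = (if n = 0 then (1 : R) else 0) + PowerSeries.coeff n ψ := by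
    rw [map_add, PowerSeries.coeff_one]
  rw [hL, hR, rhsFun]
  constructor <;> intro h <;> linear_combination h

lemma solAux_zero {R : Type*} [CommRing R] [Algebra ℚ R] (α β : R) : solAux α β 0 = 0 := by
  rw [solAux]

lemma rhsFun_congr {R : Type*} [CommRing R] (α β : R) (f g : ℕ → R) (n : ℕ)
    (h : ∀ k ≤ n, f k = g k) : rhsFun α β f n = rhsFun α β g n := by
  unfold rhsFun
  rw [h n le_rfl]
  congr 1
  refine congrArg (β * ·) (Finset.sum_congr rfl fun k hk => ?_)
  rw [Finset.mem_range] at hk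
  rw [h (k + 1) (by omega), h (n - k) (by omega)]

/-- For a commutative `ℚ`-algebra `R` and `α β : R`, there exists a unique
formal power series `φ ∈ t + t²·R[[t]]` (constant coefficient `0`, coefficient of `t` equal
to `1`) satisfying the differential equation `(1 + α·t − β·φ)·φ′ = 1 + φ`. -/
theorem exists_unique_solution_diff_eq
    (R : Type*) [CommRing R] [Algebra ℚ R] (α β : R) :
    ∃! φ : PowerSeries R,
      PowerSeries.coeff 0 φ = 0 ∧ PowerSeries.coeff 1 φ = 1 ∧
      (1 + PowerSeries.C α * PowerSeries.X - PowerSeries.C β * φ) * φ.derivativeFun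
        = 1 + φ := by
  refine ⟨PowerSeries.mk (solAux α β), ⟨?_, ?_, ?_⟩, ?_⟩
  · rw [PowerSeries.coeff_mk, solAux_zero]
  · rw [PowerSeries.coeff_mk]
    show solAux α β (0 + 1) = 1
    rw [solAux]
    norm_num [solAux_zero]
  · rw [key_iff α β _ (by rw [PowerSeries.coeff_mk, solAux_zero])]
    intro n
    simp only [PowerSeries.coeff_mk]
    exact solAux_spec α β n
  · rintro ψ ⟨h0, h1, heq⟩
    rw [key_iff α β ψ h0] at heq
    have hcoeff : ∀ n, PowerSeries.coeff n ψ = solAux α β n := by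
      intro n
      induction n using Nat.strong_induction_on with
      | _ n ih =>
        match n with
        | 0 => rw [h0, solAux_zero]
        | (m + 1) =>
          refine (natCast_succ_isUnit (R := R) m).mul_left_cancel ?_
          rw [heq m, solAux_spec α β m]
          exact rhsFun_congr α β _ _ m fun k hk => ih k (by omega)
    ext n
    rw [hcoeff, PowerSeries.coeff_mk]
end

section
/- Let R = ℚ[L] be the polynomial ring in one variable L over ℚ, and let φ be the unique formal power series in t + t²·R[[t]] satisfying (1 + L·t − L·φ)·φ′ = 1 + φ. Define aₙ := n!·(coefficient of tⁿ in φ) ∈ ℚ[L]. Then a₁ = 1, a₂ = 1, and for every n ≥ 1, a_{n+1} = aₙ + L·Σ_{i+j=n+1, i≥2, j≥1} binom(n,i)·a_i·a_j. -/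
open Polynomial in
/-- For `R = ℚ[L]` and `φ` the unique series in `t + t²·R[[t]]` with
`(1 + L·t − L·φ)·φ′ = 1 + φ`, setting `aₙ := n!·(coeff of tⁿ in φ)` one has `a 1 = 1`,
`a 2 = 1`, and for all `n ≥ 1`,
`a (n+1) = a n + L·Σ_{i+j=n+1, i≥2, j≥1} binom(n,i)·a_i·a_j`. -/
theorem grothendieck_class_recursion_M0n
    (φ : PowerSeries (Polynomial ℚ))
    (h0 : PowerSeries.coeff 0 φ = 0) (h1 : PowerSeries.coeff 1 φ = 1)
    (heq : (1 + PowerSeries.C (X : ℚ[X]) * PowerSeries.X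
        - PowerSeries.C (X : ℚ[X]) * φ) * φ.derivativeFun = 1 + φ)
    (a : ℕ → ℚ[X])
    (ha : ∀ n, a n = (n.factorial : ℚ[X]) * PowerSeries.coeff n φ) :
    a 1 = 1 ∧ a 2 = 1 ∧ ∀ n : ℕ, 1 ≤ n →
      a (n + 1) = a n + X *
        ∑ p ∈ (Finset.HasAntidiagonal.antidiagonal (n + 1)).filter (fun p => 2 ≤ p.1 ∧ 1 ≤ p.2),
          (n.choose p.1 : ℚ[X]) * a p.1 * a p.2 := by
  classical
  set c : ℕ → ℚ[X] := fun n => PowerSeries.coeff n φ with hcdef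
  have heq' : φ.derivativeFun + PowerSeries.C (X : ℚ[X]) * (PowerSeries.X * φ.derivativeFun)
      - PowerSeries.C (X : ℚ[X]) * (φ * φ.derivativeFun) = 1 + φ := by
    rw [← heq]; ring
  -- coefficient identity from the differential equation
  have key : ∀ m : ℕ, c (m+2) * ((m+1 : ℕ) + 1 : ℚ[X])
      + X * (c (m+1) * ((m : ℕ) + 1 : ℚ[X]))
      - X * ∑ k ∈ Finset.range (m + 2),
          c k * (c (m + 1 - k + 1) * ((m + 1 - k : ℕ) + 1 : ℚ[X]))
      = c (m+1) := by
    intro m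
    have H := congrArg (PowerSeries.coeff (m + 1)) heq'
    rw [map_sub, map_add, PowerSeries.coeff_C_mul, PowerSeries.coeff_C_mul,
      PowerSeries.coeff_succ_X_mul, PowerSeries.coeff_mul,
      Finset.Nat.sum_antidiagonal_eq_sum_range_succ_mk, map_add, PowerSeries.coeff_one] at H
    have hd : ∀ n, PowerSeries.coeff n φ.derivativeFun = PowerSeries.coeff (n + 1) φ * (n + 1) :=
      fun n => PowerSeries.coeff_derivative φ n
    simp only [hd] at H
    simpa using H
  -- the main recursion
  have h3 : ∀ n : ℕ, 1 ≤ n →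
      a (n + 1) = a n + X *
        ∑ p ∈ (Finset.HasAntidiagonal.antidiagonal (n + 1)).filter (fun p => 2 ≤ p.1 ∧ 1 ≤ p.2),
          (n.choose p.1 : ℚ[X]) * a p.1 * a p.2 := by
    rintro n hn
    obtain ⟨m, rfl⟩ : ∃ m, n = m + 1 := ⟨n - 1, by omega⟩
    set T : ℚ[X] := ∑ p ∈ (Finset.HasAntidiagonal.antidiagonal (m + 2)).filter (fun p => 2 ≤ p.1 ∧ 1 ≤ p.2),
        (p.2 : ℚ[X]) * c p.1 * c p.2 with hTdef
    have hS : ∑ k ∈ Finset.range (m + 2),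
        c k * (c (m + 1 - k + 1) * ((m + 1 - k : ℕ) + 1 : ℚ[X]))
        = ((m : ℚ[X]) + 1) * c (m+1) + T := by
      rw [hTdef, Finset.sum_filter, Finset.Nat.sum_antidiagonal_eq_sum_range_succ_mk]
      conv_rhs => rw [Finset.sum_range_succ]
      have peel : ∀ f : ℕ → ℚ[X], ∑ k ∈ Finset.range (m + 2), f k
          = (∑ i ∈ Finset.range m, f (i + 2)) + f 1 + f 0 := fun f => by
        rw [Finset.sum_range_succ', Finset.sum_range_succ']
      rw [peel, peel]
      have h0' : c 0 = 0 := h0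
      have h1' : c 1 = 1 := h1
      simp only [h0', h1', Nat.sub_self, Nat.sub_zero, zero_mul, mul_zero, add_zero,
        mul_one, one_mul]
      norm_num
      have hmain : ∀ i ∈ Finset.range m,
          (if 1 ≤ m + 2 - (i + 2) then
            ((m + 2 - (i + 2) : ℕ) : ℚ[X]) * c (i + 2) * c (m + 2 - (i + 2)) else 0)
          = c (i + 2) * (c (m + 1 - (i + 2) + 1) * (((m + 1 - (i + 2) : ℕ) : ℚ[X]) + 1)) := by
        intro i hi
        have him : i < m := Finset.mem_range.mp hi
        have e1 : m + 2 - (i + 2) = m - i := by omega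
        have e2 : m + 1 - (i + 2) + 1 = m - i := by omega
        have e4 : (((m + 1 - (i + 2) : ℕ) : ℚ[X]) + 1) = ((m - i : ℕ) : ℚ[X]) := by
          rw [← e2]; push_cast; ring
        rw [if_pos (by omega : 1 ≤ m + 2 - (i + 2)), e1, e2, e4]
        ring
      rw [Finset.sum_congr rfl hmain]
      ring
    -- relate n!·T to the binomial sum
    have hT : ((m + 1).factorial : ℚ[X]) * T =
        ∑ p ∈ (Finset.HasAntidiagonal.antidiagonal (m + 2)).filter (fun p => 2 ≤ p.1 ∧ 1 ≤ p.2),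
          ((m + 1).choose p.1 : ℚ[X]) * a p.1 * a p.2 := by
      rw [hTdef, Finset.mul_sum]
      refine Finset.sum_congr rfl fun p hp => ?_
      rw [Finset.mem_filter, Finset.HasAntidiagonal.mem_antidiagonal] at hp
      obtain ⟨hsum, hp1, hp2⟩ := hp
      have hile : p.1 ≤ m + 1 := by omega
      have hnat : (m + 1).factorial * p.2 = (m + 1).choose p.1 * p.1.factorial * p.2.factorial := by
        have hcf := Nat.choose_mul_factorial_mul_factorial hile
        have hsub : m + 1 - p.1 = p.2 - 1 := by omega
        rw [hsub] at hcf
        calc (m + 1).factorial * p.2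
            = ((m + 1).choose p.1 * p.1.factorial * (p.2 - 1).factorial) * p.2 := by rw [hcf]
          _ = (m + 1).choose p.1 * p.1.factorial * (p.2 * (p.2 - 1).factorial) := by ring
          _ = (m + 1).choose p.1 * p.1.factorial * p.2.factorial := by
              rw [Nat.mul_factorial_pred (by omega)]
      have hcast := congrArg (fun k : ℕ => (k : ℚ[X])) hnat
      push_cast at hcast
      rw [ha p.1, ha p.2]
      linear_combination (c p.1 * c p.2) * hcast
    have hkey := key m
    have hfac : ((m + 2).factorial : ℚ[X]) = (((m + 1 : ℕ) : ℚ[X]) + 1) * ((m + 1).factorial : ℚ[X]) := by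
      rw [Nat.factorial_succ]; push_cast; ring
    rw [ha (m + 1 + 1), ha (m + 1), ← hT]
    show ((m + 2).factorial : ℚ[X]) * c (m + 2) = ((m + 1).factorial : ℚ[X]) * c (m + 1)
      + X * (((m + 1).factorial : ℚ[X]) * T)
    linear_combination ((m + 1).factorial : ℚ[X]) * hkey
      + ((m + 1).factorial : ℚ[X]) * X * hS + c (m + 2) * hfac
  have ha1 : a 1 = 1 := by simp only [ha, h1, Nat.factorial_one, Nat.cast_one, mul_one]
  refine ⟨ha1, ?_, h3⟩
  have h2 := h3 1 le_rfl
  have hempty : (Finset.HasAntidiagonal.antidiagonal 2).filter (fun p : ℕ × ℕ => 2 ≤ p.1 ∧ 1 ≤ p.2) = ∅ := by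
    decide
  rw [hempty] at h2
  simpa [ha1] using h2
end

section
/- Let R = ℚ[L] and let φ be the unique formal power series in t + t²·R[[t]] satisfying (1 + L·t − L·φ)·φ′ = 1 + φ, with aₙ := n!·(coefficient of tⁿ in φ) ∈ ℚ[L]. Then for every n ≥ 1 there exists a finitely supported function c : ℕ → ℕ such that aₙ = Σ_k c(k)·(L − 1)^k in ℚ[L]. In particular each aₙ lies in ℤ[L] and, when written as a polynomial in T = L − 1, has nonnegative integer coefficients. -/
open Polynomial Finset in
noncomputable def evT : Polynomial ℕ →+* ℚ[X] :=
  eval₂RingHom (Nat.castRingHom ℚ[X]) (X - 1)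

open Polynomial Finset in
lemma evT_to_finsupp (q : Polynomial ℕ) :
    ∃ c : ℕ →₀ ℕ, evT q = c.sum fun k m => (m : ℚ[X]) * (X - 1) ^ k := by
  refine ⟨q.toFinsupp.coeff, ?_⟩
  rw [evT, coe_eval₂RingHom, eval₂_eq_sum, Polynomial.sum_def, Finsupp.sum]
  rfl

set_option linter.deprecated false in
lemma coeffDerivFun {R : Type*} [CommSemiring R] (f : PowerSeries R) (n : ℕ) :
    PowerSeries.coeff n f.derivativeFun = PowerSeries.coeff (n + 1) f * (n + 1) :=
  PowerSeries.coeff_derivative f n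

open Polynomial Finset in
lemma coeffrec (φ : PowerSeries (Polynomial ℚ))
    (h0 : PowerSeries.coeff 0 φ = 0) (h1 : PowerSeries.coeff 1 φ = 1)
    (heq : (1 + PowerSeries.C (X : ℚ[X]) * PowerSeries.X
        - PowerSeries.C (X : ℚ[X]) * φ) * φ.derivativeFun = 1 + φ) (m : ℕ) :
    PowerSeries.coeff (m+3) φ * ((m+3 : ℕ) : ℚ[X]) =
      (1 + X) * PowerSeries.coeff (m+2) φ
      + X * ∑ i ∈ Ico 2 (m+2), PowerSeries.coeff i φ *
          (PowerSeries.coeff (m+2-i+1) φ * (((m+2-i : ℕ) : ℚ[X])+1)) := by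
  have hadd : φ.derivativeFun + PowerSeries.C (X : ℚ[X]) * (PowerSeries.X * φ.derivativeFun)
      = 1 + φ + PowerSeries.C (X : ℚ[X]) * (φ * φ.derivativeFun) := by
    linear_combination heq
  have hc := congrArg (PowerSeries.coeff (m+2)) hadd
  simp only [map_add, PowerSeries.coeff_C_mul] at hc
  rw [show m + 2 = (m+1) + 1 from rfl, PowerSeries.coeff_succ_X_mul] at hc
  rw [coeffDerivFun, coeffDerivFun,
    PowerSeries.coeff_one, if_neg (by omega), PowerSeries.coeff_mul,
    Finset.Nat.sum_antidiagonal_eq_sum_range_succ_mk] at hc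
  simp only [show (m:ℕ)+1+1 = m+2 from rfl, show (m:ℕ)+1+1+1 = m+3 from rfl,
    Nat.succ_eq_add_one, show (m:ℕ)+2+1 = m+3 from rfl] at hc
  have hsplit : ∑ i ∈ range (m+3), PowerSeries.coeff i φ *
        PowerSeries.coeff (m+2-i) φ.derivativeFun
      = PowerSeries.coeff (m+2) φ * ((m+2 : ℕ) : ℚ[X])
        + PowerSeries.coeff (m+2) φ
        + ∑ i ∈ Ico 2 (m+2), PowerSeries.coeff i φ *
            (PowerSeries.coeff (m+2-i+1) φ * (((m+2-i : ℕ) : ℚ[X])+1)) := by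
    rw [show (m:ℕ)+3 = (m+2)+1 from rfl, Finset.sum_range_succ]
    rw [Finset.range_eq_Ico, ← Finset.sum_Ico_consecutive _ (by omega : 0 ≤ 2) (by omega : 2 ≤ m+2)]
    have e2 : ∑ i ∈ Ico 0 2, PowerSeries.coeff i φ *
        PowerSeries.coeff (m+2-i) φ.derivativeFun
        = PowerSeries.coeff (m+2) φ * ((m+2 : ℕ) : ℚ[X]) := by
      rw [show Ico 0 2 = {0, 1} from rfl,
        Finset.sum_insert (by decide), Finset.sum_singleton, h0, zero_mul,
        show m+2-1 = m+1 from rfl, h1, one_mul,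
        coeffDerivFun, show (m:ℕ)+1+1 = m+2 from rfl]
      push_cast
      ring
    rw [e2, Nat.sub_self, coeffDerivFun, h1]
    have e3 : ∀ i ∈ Ico 2 (m+2), PowerSeries.coeff i φ *
        PowerSeries.coeff (m+2-i) φ.derivativeFun
        = PowerSeries.coeff i φ *
            (PowerSeries.coeff (m+2-i+1) φ * (((m+2-i : ℕ) : ℚ[X])+1)) := by
      intro i hi
      rw [coeffDerivFun]
    rw [Finset.sum_congr rfl e3]
    push_cast
    ring
  rw [hsplit] at hc
  push_cast at hc ⊢
  linear_combination hc

open Polynomial Finset in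

lemma arec (φ : PowerSeries (Polynomial ℚ))
    (h0 : PowerSeries.coeff 0 φ = 0) (h1 : PowerSeries.coeff 1 φ = 1)
    (heq : (1 + PowerSeries.C (X : ℚ[X]) * PowerSeries.X
        - PowerSeries.C (X : ℚ[X]) * φ) * φ.derivativeFun = 1 + φ)
    (a : ℕ → ℚ[X])
    (ha : ∀ n, a n = (n.factorial : ℚ[X]) * PowerSeries.coeff n φ) (m : ℕ) :
    a (m+3) = (1 + X) * a (m+2)
      + X * ∑ i ∈ Ico 2 (m+2), (((m+2).choose i : ℕ) : ℚ[X]) * (a i * a (m+2-i+1)) := by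
  have hrec := coeffrec φ h0 h1 heq m
  have hfac : ((m+3).factorial : ℚ[X]) = ((m+2).factorial : ℚ[X]) * ((m+3:ℕ) : ℚ[X]) := by
    rw [show (m:ℕ)+3 = (m+2)+1 from rfl, Nat.factorial_succ]
    push_cast; ring
  have hsum : (((m+2).factorial : ℕ) : ℚ[X]) * ∑ i ∈ Ico 2 (m+2), PowerSeries.coeff i φ *
          (PowerSeries.coeff (m+2-i+1) φ * (((m+2-i : ℕ) : ℚ[X])+1))
      = ∑ i ∈ Ico 2 (m+2), (((m+2).choose i : ℕ) : ℚ[X]) * (a i * a (m+2-i+1)) := by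
    rw [Finset.mul_sum]
    refine Finset.sum_congr rfl fun i hi => ?_
    rw [ha i, ha (m+2-i+1)]
    have hile : i ≤ m+2 := by simp only [Finset.mem_Ico] at hi; omega
    have h2 := Nat.choose_mul_factorial_mul_factorial hile
    have h2Q := congrArg (fun n : ℕ => (n : ℚ[X])) h2
    push_cast at h2Q
    have h3 : (((m+2-i+1).factorial : ℕ) : ℚ[X])
        = (((m+2-i : ℕ) : ℚ[X])+1) * (((m+2-i).factorial : ℕ) : ℚ[X]) := by
      rw [Nat.factorial_succ]; push_cast; ring
    have keyQ : (((m+2).choose i : ℕ) : ℚ[X]) * ((i.factorial : ℕ) : ℚ[X])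
        * (((m+2-i+1).factorial : ℕ) : ℚ[X])
        = (((m+2).factorial : ℕ) : ℚ[X]) * (((m+2-i : ℕ) : ℚ[X])+1) := by
      rw [h3]; linear_combination ((((m+2-i : ℕ) : ℚ[X])+1)) * h2Q
    linear_combination (-(PowerSeries.coeff i φ * PowerSeries.coeff (m+2-i+1) φ)) * keyQ
  rw [ha (m+3), ha (m+2), hfac]
  calc ((m+2).factorial : ℚ[X]) * ((m+3:ℕ) : ℚ[X]) * PowerSeries.coeff (m+3) φ
      = ((m+2).factorial : ℚ[X]) * (PowerSeries.coeff (m+3) φ * ((m+3:ℕ) : ℚ[X])) := by ring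
    _ = ((m+2).factorial : ℚ[X]) * ((1 + X) * PowerSeries.coeff (m+2) φ
        + X * ∑ i ∈ Ico 2 (m+2), PowerSeries.coeff i φ *
          (PowerSeries.coeff (m+2-i+1) φ * (((m+2-i : ℕ) : ℚ[X])+1))) := by rw [hrec]
    _ = (1 + X) * (((m+2).factorial : ℚ[X]) * PowerSeries.coeff (m+2) φ)
        + X * (((m+2).factorial : ℚ[X]) * ∑ i ∈ Ico 2 (m+2), PowerSeries.coeff i φ *
          (PowerSeries.coeff (m+2-i+1) φ * (((m+2-i : ℕ) : ℚ[X])+1))) := by ring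
    _ = _ := by rw [hsum]

open Polynomial Finset in

lemma a2eq (φ : PowerSeries (Polynomial ℚ))
    (h0 : PowerSeries.coeff 0 φ = 0) (h1 : PowerSeries.coeff 1 φ = 1)
    (heq : (1 + PowerSeries.C (X : ℚ[X]) * PowerSeries.X
        - PowerSeries.C (X : ℚ[X]) * φ) * φ.derivativeFun = 1 + φ)
    (a : ℕ → ℚ[X])
    (ha : ∀ n, a n = (n.factorial : ℚ[X]) * PowerSeries.coeff n φ) :
    a 2 = 1 := by
  have hadd : φ.derivativeFun + PowerSeries.C (X : ℚ[X]) * (PowerSeries.X * φ.derivativeFun)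
      = 1 + φ + PowerSeries.C (X : ℚ[X]) * (φ * φ.derivativeFun) := by
    linear_combination heq
  have hc := congrArg (PowerSeries.coeff 1) hadd
  simp only [map_add, PowerSeries.coeff_C_mul] at hc
  rw [show (1:ℕ) = 0 + 1 from rfl, PowerSeries.coeff_succ_X_mul] at hc
  rw [coeffDerivFun, coeffDerivFun,
    PowerSeries.coeff_one, if_neg (by omega), PowerSeries.coeff_mul,
    Finset.Nat.sum_antidiagonal_eq_sum_range_succ_mk] at hc
  simp only [Nat.succ_eq_add_one] at hc
  rw [Finset.sum_range_succ, Finset.sum_range_one] at hc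
  simp only [h0, h1, zero_mul, one_mul, Nat.sub_self, Nat.sub_zero,
    coeffDerivFun, h1] at hc
  push_cast at hc
  rw [ha 2, show ((2:ℕ).factorial : ℚ[X]) = 2 by norm_num [Nat.factorial]]
  linear_combination hc

open Polynomial in
/-- With `φ` the unique solution of `(1 + L·t − L·φ)·φ′ = 1 + φ` in
`t + t²·ℚ[L][[t]]` and `aₙ := n!·(coeff of tⁿ in φ)`, every `aₙ` (`n ≥ 1`) is a sum
`Σ_k c(k)·(L − 1)^k` with finitely supported `c : ℕ → ℕ`: it has nonnegative integer
coefficients as a polynomial in `T = L − 1`. -/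
theorem grothendieck_class_M0n_torified
    (φ : PowerSeries (Polynomial ℚ))
    (h0 : PowerSeries.coeff 0 φ = 0) (h1 : PowerSeries.coeff 1 φ = 1)
    (heq : (1 + PowerSeries.C (X : ℚ[X]) * PowerSeries.X
        - PowerSeries.C (X : ℚ[X]) * φ) * φ.derivativeFun = 1 + φ)
    (a : ℕ → ℚ[X])
    (ha : ∀ n, a n = (n.factorial : ℚ[X]) * PowerSeries.coeff n φ) :
    ∀ n : ℕ, 1 ≤ n → ∃ c : ℕ →₀ ℕ,
      a n = c.sum fun k m => (m : ℚ[X]) * (X - 1) ^ k := by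
  have hX : (X : ℚ[X]) ∈ evT.rangeS := ⟨1 + X, by simp [evT]⟩
  have h1X : (1 + X : ℚ[X]) ∈ evT.rangeS := add_mem (one_mem _) hX
  have key : ∀ n : ℕ, 1 ≤ n → a n ∈ evT.rangeS := by
    intro n
    induction n using Nat.strong_induction_on with
    | _ n ih =>
      intro hn
      rcases n with _|_|_|m
      · omega
      · have : a 1 = 1 := by rw [ha 1, h1]; simp
        rw [this]; exact one_mem _
      · rw [a2eq φ h0 h1 heq a ha]; exact one_mem _
      · rw [arec φ h0 h1 heq a ha m]
        refine add_mem (mul_mem h1X (ih (m+2) (by omega) (by omega))) (mul_mem hX ?_)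
        refine Subsemiring.sum_mem _ fun i hi => ?_
        have hi' : 2 ≤ i ∧ i < m+2 := by simpa [Finset.mem_Ico] using hi
        exact mul_mem (natCast_mem _ _)
          (mul_mem (ih i (by omega) (by omega)) (ih (m+2-i+1) (by omega) (by omega)))
  intro n hn
  obtain ⟨q, hq⟩ := key n hn
  obtain ⟨c, hc⟩ := evT_to_finsupp q
  exact ⟨c, by rw [← hq, hc]⟩
end

section
/- Fix an integer d ≥ 1. Let R = ℚ[L] and set π_k := Σ_{i=0}^{k} L^i ∈ ℚ[L] for k ≥ 0 (with the convention π_{−1} = 0). Let ψ be the unique formal power series in t + t²·R[[t]] satisfying (1 + L^d·t − L·π_{d−1}·ψ)·ψ′ = 1 + ψ, and define bₙ := n!·(coefficient of tⁿ in ψ) ∈ ℚ[L]. Then b₁ = 1, b₂ = π_{d−1}, and for every n ≥ 2, b_{n+1} = (π_d + n·L·π_{d−2})·bₙ + L·π_{d−1}·Σ_{i+j=n+1, 2≤i≤n−1} binom(n,i)·b_i·b_j. -/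
open Finset in


open Polynomial in
/-- Fix `d ≥ 1`, let `π_k := Σ_{i=0}^{k} L^i` (with `π_{−1} = 0`; below
`π_{k}` is written as `Σ_{i ∈ range (k+1)} L^i`, and `π_{d−2}` as `Σ_{i ∈ range (d−1)} L^i`,
which is `0` when `d = 1`). Let `ψ` be the unique solution in `t + t²·ℚ[L][[t]]` of
`(1 + L^d·t − L·π_{d−1}·ψ)·ψ′ = 1 + ψ` and `bₙ := n!·(coeff of tⁿ in ψ)`. Then `b 1 = 1`,
`b 2 = π_{d−1}`, and for all `n ≥ 2`,
`b (n+1) = (π_d + n·L·π_{d−2})·b n + L·π_{d−1}·Σ_{i+j=n+1, 2≤i≤n−1} binom(n,i)·b_i·b_j`. -/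
theorem grothendieck_class_recursion_Tdn
    (d : ℕ) (hd : 1 ≤ d)
    (ψ : PowerSeries (Polynomial ℚ))
    (h0 : PowerSeries.coeff 0 ψ = 0) (h1 : PowerSeries.coeff 1 ψ = 1)
    (heq : (1 + PowerSeries.C ((X : ℚ[X]) ^ d) * PowerSeries.X
        - PowerSeries.C ((X : ℚ[X]) * ∑ i ∈ Finset.range d, (X : ℚ[X]) ^ i) * ψ)
        * ψ.derivativeFun = 1 + ψ)
    (b : ℕ → ℚ[X])
    (hb : ∀ n, b n = (n.factorial : ℚ[X]) * PowerSeries.coeff n ψ) :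
    b 1 = 1 ∧ b 2 = (∑ i ∈ Finset.range d, (X : ℚ[X]) ^ i) ∧
    ∀ n : ℕ, 2 ≤ n →
      b (n + 1) = ((∑ i ∈ Finset.range (d + 1), (X : ℚ[X]) ^ i)
            + (n : ℚ[X]) * X * ∑ i ∈ Finset.range (d - 1), (X : ℚ[X]) ^ i) * b n
        + X * (∑ i ∈ Finset.range d, (X : ℚ[X]) ^ i) *
          ∑ p ∈ (Finset.HasAntidiagonal.antidiagonal (n + 1)).filter (fun p => 2 ≤ p.1 ∧ p.1 ≤ n - 1),
            (n.choose p.1 : ℚ[X]) * b p.1 * b p.2 := by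
  obtain ⟨e, rfl⟩ : ∃ e, d = e + 1 := ⟨d - 1, by omega⟩
  clear hd
  set a : ℕ → ℚ[X] := fun n => PowerSeries.coeff n ψ with ha
  set P : ℚ[X] := ∑ i ∈ Finset.range (e + 1), (X : ℚ[X]) ^ i with hPdef
  have heq' : ψ.derivativeFun + PowerSeries.C ((X : ℚ[X]) ^ (e+1)) * (PowerSeries.X * ψ.derivativeFun)
      = 1 + ψ + PowerSeries.C ((X : ℚ[X]) * P) * (ψ * ψ.derivativeFun) := by
    linear_combination heq
  have key : ∀ n : ℕ, a (n+2) * ((n : ℚ[X]) + 2) + X^(e+1) * (a (n+1) * ((n : ℚ[X]) + 1))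
      = a (n+1) + X * P * ∑ k ∈ Finset.range (n+2),
          a k * (a (n+1-k+1) * (((n+1-k : ℕ) : ℚ[X]) + 1)) := by
    intro n
    have h := congrArg (PowerSeries.coeff (n + 1)) heq'
    rw [map_add, map_add, map_add, PowerSeries.coeff_C_mul, PowerSeries.coeff_C_mul,
      PowerSeries.coeff_succ_X_mul, PowerSeries.coeff_one] at h
    have hcd : ∀ (f : PowerSeries ℚ[X]) (k : ℕ), PowerSeries.coeff k f.derivativeFun
        = PowerSeries.coeff (k + 1) f * (k + 1) := fun f k => PowerSeries.coeff_derivative f k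
    simp only [PowerSeries.coeff_mul, Finset.Nat.sum_antidiagonal_eq_sum_range_succ_mk,
      hcd, Nat.succ_eq_add_one, if_neg (Nat.succ_ne_zero n)] at h
    push_cast at h
    linear_combination h
  have hb0 : b 0 = 0 := by rw [hb]; simp [← ha, h0]
  have hb1 : b 1 = 1 := by rw [hb]; simp [← ha, h1]
  have hgeom : (X : ℚ[X]) * P + 1 = P + X ^ (e + 1) := by
    have g1 : ∑ i ∈ Finset.range (e + 1 + 1), (X : ℚ[X]) ^ i
        = X * ∑ i ∈ Finset.range (e + 1), (X : ℚ[X]) ^ i + 1 := geom_sum_succ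
    have g2 := Finset.sum_range_succ (fun i => (X : ℚ[X]) ^ i) (e + 1)
    rw [← hPdef] at g1
    linear_combination g2 - g1
  refine ⟨hb1, ?_, ?_⟩
  · -- b 2 = P
    have K := key 0
    simp only [Finset.sum_range_succ, Finset.sum_range_zero] at K
    have ha0 : a 0 = 0 := h0
    have ha1 : a 1 = 1 := h1
    rw [ha0, ha1] at K
    push_cast at K
    have hb2 : b 2 = 2 * a 2 := by rw [hb]; norm_num [Nat.factorial]; rfl
    -- K : a 2 * 2 + X^(e+1) * 1 = 1 + X * P * 1  (roughly)
    linear_combination hb2 + K + hgeom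
  · intro n hn
    obtain ⟨m, rfl⟩ : ∃ m, n = m + 2 := ⟨n - 2, by omega⟩
    clear hn
    set g : ℕ → ℚ[X] := fun k => (((m+2).choose k : ℕ) : ℚ[X]) * b k * b (m+2+1-k) with hg
    set S : ℚ[X] := ∑ p ∈ Finset.filter (fun p => 2 ≤ p.1 ∧ p.1 ≤ m + 2 - 1)
        (Finset.HasAntidiagonal.antidiagonal (m + 2 + 1)), ((m + 2).choose p.1 : ℚ[X]) * b p.1 * b p.2 with hSdef
    -- Step 1: S as a range sum with if
    have hS : S = ∑ k ∈ Finset.range (m + 4),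
        if 2 ≤ k ∧ k ≤ m + 1 then g k else 0 := by
      rw [hSdef, Finset.sum_filter, Finset.Nat.sum_antidiagonal_eq_sum_range_succ_mk]
      rfl
    -- Step 2: split full sum
    have hsplit : ∑ k ∈ Finset.range (m + 4), g k
        = S + (((m + 2 : ℕ) : ℚ[X]) * b (m + 2) + b (m + 2)) := by
      have h1 : Finset.filter (fun k => ¬ (2 ≤ k ∧ k ≤ m + 1)) (Finset.range (m + 4))
          = {0, 1, m + 2, m + 3} := by
        ext k
        simp only [Finset.mem_filter, Finset.mem_range, Finset.mem_insert,
          Finset.mem_singleton]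
        omega
      have h2 := Finset.sum_filter_add_sum_filter_not (Finset.range (m + 4))
        (fun k => 2 ≤ k ∧ k ≤ m + 1) g
      rw [Finset.sum_filter, h1] at h2
      have h3 : ∑ k ∈ ({0, 1, m + 2, m + 3} : Finset ℕ), g k
          = ((m + 2 : ℕ) : ℚ[X]) * b (m + 2) + b (m + 2) := by
        rw [Finset.sum_insert (by simp <;> omega), Finset.sum_insert (by simp <;> omega),
          Finset.sum_insert (by simp <;> omega), Finset.sum_singleton]
        have e0 : g 0 = 0 := by simp [hg, hb0]
        have e1 : g 1 = ((m + 2 : ℕ) : ℚ[X]) * b (m + 2) := by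
          simp [hg, hb1, Nat.choose_one_right]
        have e2 : g (m + 2) = b (m + 2) := by
          have : m + 2 + 1 - (m + 2) = 1 := by omega
          simp [hg, this, hb1, Nat.choose_self]
        have e3 : g (m + 3) = 0 := by
          have : (m + 2).choose (m + 3) = 0 := Nat.choose_succ_self (m + 2)
          simp [hg, this]
        rw [e0, e1, e2, e3]; ring
      rw [h3] at h2
      rw [← h2, hS]
    -- Step 3: per-term identity
    have hterm : ∀ k ∈ Finset.range (m + 3),
        (((m + 2).factorial : ℕ) : ℚ[X]) * (a k * (a (m + 2 - k + 1)
          * (((m + 2 - k : ℕ) : ℚ[X]) + 1))) = g k := by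
      intro k hk
      simp only [Finset.mem_range] at hk
      have hk' : k ≤ m + 2 := by omega
      have hi1 : m + 2 - k + 1 = m + 2 + 1 - k := by omega
      have hi2 : (m + 2 - k) + 1 = m + 2 + 1 - k := by omega
      have h5 : m + 2 + 1 - k = (m + 2 - k) + 1 := by omega
      have hc : (m + 2).choose k * k.factorial * (m + 2 + 1 - k).factorial
          = (m + 2).factorial * (m + 2 + 1 - k) := by
        have h4 := Nat.choose_mul_factorial_mul_factorial hk'
        rw [h5, Nat.factorial_succ, ← h4]
        ring
      have hcq : (((m + 2).choose k * k.factorial * (m + 2 + 1 - k).factorial : ℕ) : ℚ[X])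
          = (((m + 2).factorial * (m + 2 + 1 - k) : ℕ) : ℚ[X]) := by
        rw [hc]
      push_cast at hcq
      have hc2 : (((m + 2 - k : ℕ) : ℚ[X]) + 1) = ((m + 2 + 1 - k : ℕ) : ℚ[X]) := by
        rw [← hi2]; push_cast; ring
      rw [hg]
      simp only []
      rw [hb k, hb (m + 2 + 1 - k), hi1, hc2]
      linear_combination - (a k * a (m + 2 + 1 - k)) * hcq
    -- Step 4: sum version
    have hsum : (((m + 2).factorial : ℕ) : ℚ[X]) * (∑ k ∈ Finset.range (m + 3),
        a k * (a (m + 2 - k + 1) * (((m + 2 - k : ℕ) : ℚ[X]) + 1)))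
        = S + (((m + 2 : ℕ) : ℚ[X]) * b (m + 2) + b (m + 2)) := by
      rw [Finset.mul_sum, Finset.sum_congr rfl hterm, ← hsplit,
        Finset.sum_range_succ (f := g) (n := m + 3)]
      have e3 : g (m + 3) = 0 := by
        have : (m + 2).choose (m + 3) = 0 := Nat.choose_succ_self (m + 2)
        simp [hg, this]
      rw [e3, add_zero]
    -- Step 5: assemble
    have K := key (m + 1)
    simp only [show m + 1 + 1 = m + 2 from rfl, show m + 1 + 2 = m + 3 from rfl] at K
    push_cast at K
    push_cast at hsum
    have ebn : b (m + 2) = (((m + 2).factorial : ℕ) : ℚ[X]) * a (m + 2) := hb (m + 2)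
    have ebn1 : b (m + 3) = (((m + 3).factorial : ℕ) : ℚ[X]) * a (m + 3) := hb (m + 3)
    have hfac : (((m + 3).factorial : ℕ) : ℚ[X])
        = ((m : ℚ[X]) + 3) * (((m + 2).factorial : ℕ) : ℚ[X]) := by
      rw [show m + 3 = (m + 2) + 1 from rfl, Nat.factorial_succ]
      push_cast; ring
    have hPs : P = (∑ i ∈ Finset.range e, (X : ℚ[X]) ^ i) + X ^ e := by
      rw [hPdef, Finset.sum_range_succ]
    have hpid : ∑ i ∈ Finset.range (e + 1 + 1), (X : ℚ[X]) ^ i = X * P + 1 := by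
      rw [geom_sum_succ, ← hPdef]
    have hr : Finset.range (e + 1 - 1) = Finset.range e := by norm_num
    rw [hr, hpid]
    push_cast
    linear_combination ebn1 + a (m + 3) * hfac
      + (((m + 2).factorial : ℕ) : ℚ[X]) * K
      + (X : ℚ[X]) * P * hsum
      + (((m : ℚ[X]) + 2) * X ^ (e + 1) - 1) * ebn
      + ((m : ℚ[X]) + 2) * X * b (m + 2) * hPs
end

section
/- Fix an integer d ≥ 1, let R = ℚ[L], set π_{d−1} := Σ_{i=0}^{d−1} L^i, and let ψ be the unique formal power series in t + t²·R[[t]] satisfying (1 + L^d·t − L·π_{d−1}·ψ)·ψ′ = 1 + ψ, with bₙ := n!·(coefficient of tⁿ in ψ) ∈ ℚ[L]. Then for every n ≥ 1 there exists a finitely supported function c : ℕ → ℕ such that bₙ = Σ_k c(k)·(L − 1)^k in ℚ[L]. In particular each bₙ lies in ℤ[L] and, written as a polynomial in T = L − 1, has nonnegative integer coefficients. -/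
open Polynomial

/-- The ring hom `ℕ[T] → ℚ[X]` sending `T ↦ X - 1`. -/
noncomputable def torif : Polynomial ℕ →+* ℚ[X] :=
  Polynomial.eval₂RingHom (Nat.castRingHom ℚ[X]) (Polynomial.X - 1)

lemma torif_repr (q : Polynomial ℕ) : ∃ c : ℕ →₀ ℕ,
    torif q = c.sum fun k m => (m : ℚ[X]) * (Polynomial.X - 1) ^ k := by
  refine ⟨q.toFinsupp.coeff, ?_⟩
  rw [torif, coe_eval₂RingHom, Polynomial.eval₂_eq_sum, Polynomial.sum_def, Finsupp.sum]
  rfl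

lemma torif_X_mem : (X : ℚ[X]) ∈ torif.rangeS := ⟨Polynomial.X + 1, by simp [torif]⟩

open Polynomial in
/-- Fix `d ≥ 1`, let `π_{d−1} := Σ_{i=0}^{d−1} L^i`, let `ψ` be the unique
solution in `t + t²·ℚ[L][[t]]` of `(1 + L^d·t − L·π_{d−1}·ψ)·ψ′ = 1 + ψ`, and set
`bₙ := n!·(coeff of tⁿ in ψ)`. Then for every `n ≥ 1` there is a finitely supported
`c : ℕ → ℕ` with `bₙ = Σ_k c(k)·(L − 1)^k`: each `bₙ`, written in `T = L − 1`, has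
nonnegative integer coefficients. -/
theorem grothendieck_class_Tdn_torified
    (d : ℕ) (hd : 1 ≤ d)
    (ψ : PowerSeries (Polynomial ℚ))
    (h0 : PowerSeries.coeff 0 ψ = 0) (h1 : PowerSeries.coeff 1 ψ = 1)
    (heq : (1 + PowerSeries.C ((X : ℚ[X]) ^ d) * PowerSeries.X
        - PowerSeries.C ((X : ℚ[X]) * ∑ i ∈ Finset.range d, (X : ℚ[X]) ^ i) * ψ)
        * ψ.derivativeFun = 1 + ψ)
    (b : ℕ → ℚ[X])
    (hb : ∀ n, b n = (n.factorial : ℚ[X]) * PowerSeries.coeff n ψ) :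
    ∀ n : ℕ, 1 ≤ n → ∃ c : ℕ →₀ ℕ,
      b n = c.sum fun k m => (m : ℚ[X]) * (X - 1) ^ k := by
  set P : ℚ[X] := (X : ℚ[X]) * ∑ i ∈ Finset.range d, (X : ℚ[X]) ^ i with hPdef
  set S : Subsemiring ℚ[X] := torif.rangeS with hSdef
  have hXS : (X : ℚ[X]) ∈ S := torif_X_mem
  have hPS : P ∈ S := mul_mem hXS (sum_mem (fun i _ => pow_mem hXS i))
  have hb0 : b 0 = 0 := by rw [hb]; simp [h0]
  have hb1 : b 1 = 1 := by rw [hb]; simp [h1]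
  -- coefficient recurrence
  have hrec : ∀ m : ℕ,
      (PowerSeries.coeff (m+2) ψ) * ((m:ℚ[X])+2)
        + X^d * ((PowerSeries.coeff (m+1) ψ) * ((m:ℚ[X])+1))
      = PowerSeries.coeff (m+1) ψ
        + P * ∑ p ∈ Finset.HasAntidiagonal.antidiagonal (m+1),
              (PowerSeries.coeff p.1 ψ) * ((PowerSeries.coeff (p.2+1) ψ) * ((p.2:ℚ[X])+1)) := by
    intro m
    have key : ψ.derivativeFun
          + PowerSeries.C ((X:ℚ[X])^d) * (PowerSeries.X * ψ.derivativeFun)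
        = 1 + ψ + PowerSeries.C P * (ψ * ψ.derivativeFun) := by
      linear_combination heq
    have h := congrArg (PowerSeries.coeff (m+1)) key
    rw [map_add, map_add, map_add, PowerSeries.coeff_C_mul, PowerSeries.coeff_C_mul,
      PowerSeries.coeff_succ_X_mul, PowerSeries.coeff_one, PowerSeries.coeff_mul] at h
    have hdf : ∀ n : ℕ, PowerSeries.coeff n ψ.derivativeFun = PowerSeries.coeff (n+1) ψ * (n+1) :=
      fun n => PowerSeries.coeff_derivative ψ n
    simp only [hdf] at h
    push_cast at h
    convert h using 2 <;> push_cast <;> ring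
  -- the recurrence in terms of `b`
  have recb : ∀ m : ℕ,
      b (m+2) + ((m:ℚ[X])+1) * (X^d * b (m+1))
      = b (m+1) + P * ∑ p ∈ Finset.HasAntidiagonal.antidiagonal (m+1),
          (((m+1).choose p.1 : ℕ) : ℚ[X]) * (b p.1 * b (p.2+1)) := by
    intro m
    have hsum : ∑ p ∈ Finset.HasAntidiagonal.antidiagonal (m+1),
          (((m+1).choose p.1 : ℕ) : ℚ[X]) * (b p.1 * b (p.2+1))
        = ((m+1).factorial : ℚ[X]) * ∑ p ∈ Finset.HasAntidiagonal.antidiagonal (m+1),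
            (PowerSeries.coeff p.1 ψ) * ((PowerSeries.coeff (p.2+1) ψ) * ((p.2:ℚ[X])+1)) := by
      rw [Finset.mul_sum]
      refine Finset.sum_congr rfl ?_
      intro p hp
      rw [Finset.HasAntidiagonal.mem_antidiagonal] at hp
      rw [hb p.1, hb (p.2+1)]
      have hfac : (m+1).factorial = (m+1).choose p.1 * p.1.factorial * p.2.factorial := by
        rw [← hp, Nat.add_comm p.1 p.2,
          ← Nat.add_choose_mul_factorial_mul_factorial p.2 p.1]
        ring
      have hfac' : ((m+1).factorial : ℚ[X])
          = (((m+1).choose p.1 : ℕ) : ℚ[X]) * (p.1.factorial : ℚ[X]) * (p.2.factorial : ℚ[X]) := by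
        exact_mod_cast congrArg (Nat.cast : ℕ → ℚ[X]) hfac
      have hfs : ((p.2+1).factorial : ℚ[X]) = ((p.2:ℚ[X])+1) * (p.2.factorial : ℚ[X]) := by
        have := Nat.factorial_succ p.2
        push_cast [this]
        ring
      rw [hfs, hfac']
      ring
    have hf2 : ((m+2).factorial : ℚ[X]) = ((m:ℚ[X])+2) * ((m+1).factorial : ℚ[X]) := by
      have : (m+2).factorial = (m+2) * (m+1).factorial := Nat.factorial_succ (m+1)
      push_cast [this]
      ring
    rw [hsum, hb (m+2), hb (m+1), hf2]
    linear_combination ((m+1).factorial : ℚ[X]) * hrec m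
  -- main induction: every `b n` lies in `S`
  have hS : ∀ n : ℕ, b n ∈ S := by
    intro n
    induction n using Nat.strong_induction_on with
    | _ n ih =>
      match n with
      | 0 => rw [hb0]; exact zero_mem _
      | 1 => rw [hb1]; exact one_mem _
      | (m+2) =>
        have hmem : ((1 : ℕ), m) ∈ Finset.HasAntidiagonal.antidiagonal (m+1) := by
          rw [Finset.HasAntidiagonal.mem_antidiagonal]; omega
        have hP : P = X * ∑ i ∈ Finset.range (d-1), (X:ℚ[X])^i + X^d := by
          obtain ⟨e, rfl⟩ : ∃ e, d = e + 1 := ⟨d-1, by omega⟩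
          rw [hPdef]
          simp only [Nat.add_sub_cancel]
          rw [Finset.sum_range_succ]
          ring
        have hsplit : b (m+2)
            = b (m+1) + ((m:ℚ[X])+1) * ((X * ∑ i ∈ Finset.range (d-1), (X:ℚ[X])^i) * b (m+1))
              + P * ∑ p ∈ (Finset.HasAntidiagonal.antidiagonal (m+1)).erase (1, m),
                  (((m+1).choose p.1 : ℕ) : ℚ[X]) * (b p.1 * b (p.2+1)) := by
          have h := recb m
          rw [← Finset.add_sum_erase _ _ hmem] at h
          simp only [Nat.choose_one_right, hb1] at h
          push_cast at h
          linear_combination h + ((m:ℚ[X])+1) * b (m+1) * hP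
        rw [hsplit]
        refine add_mem (add_mem (ih (m+1) (by omega)) ?_) ?_
        · refine mul_mem ?_ (mul_mem (mul_mem hXS
            (sum_mem (fun i _ => pow_mem hXS i))) (ih (m+1) (by omega)))
          have : ((m:ℚ[X])+1) = (((m+1 : ℕ)) : ℚ[X]) := by push_cast; ring
          rw [this]
          exact natCast_mem S (m+1)
        · refine mul_mem hPS (sum_mem ?_)
          intro p hp
          rw [Finset.mem_erase, Finset.HasAntidiagonal.mem_antidiagonal] at hp
          rcases Nat.eq_zero_or_pos p.1 with h1' | h1'
          · have : b p.1 = 0 := by rw [h1', hb0]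
            rw [this]
            simp only [zero_mul, mul_zero]
            exact zero_mem _
          · exact mul_mem (natCast_mem S _)
              (mul_mem (ih p.1 (by omega)) (ih (p.2+1) (by omega)))
  intro n hn
  obtain ⟨q, hq⟩ := hS n
  obtain ⟨c, hc⟩ := torif_repr q
  exact ⟨c, by rw [← hq, hc]⟩
end
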